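/- For 0 < q < 1, set Q = 1/(q^{-1} - q) and λ_{l,n}^2 = (n/2)^2 + q^n([l+1/2]_q^2 - [n/2]_q^2). Then for l ∈ (1/2)ℕ, 2l ≥ 1, and integer 0 ≤ n ≤ 2l-1, one has 1 + λ_{l,n}^2 ≥ 1 + (n/2)^2 + q^{n-2l+1}. -/

import Mathlib

noncomputable def qnum (q a : ℝ) : ℝ := (q ^ (-a) - q ^ a) / (q⁻¹ - q)

/-- `λ_{l,n}²` for `l` given as a real number. -/
noncomputable def lamSq (q l n : ℝ) : ℝ :=
  (n / 2) ^ 2 + q ^ n * ((qnum q (l + 1 / 2)) ^ 2 - (qnum q (n / 2)) ^ 2)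

lemma core_ineq (s A T : ℝ) (hs0 : 0 < s) (hs1 : s < 1) (hA0 : 0 < A) (hA1 : A ≤ 1)
    (hT0 : 0 < T) (hT1 : T ≤ 1) :
    ((T ^ 2)⁻¹ : ℝ) ≤ A ^ 2 *
      ((((A * T * s ^ 2)⁻¹ - A * T * s ^ 2) / ((s ^ 2)⁻¹ - s ^ 2)) ^ 2 -
        (((A)⁻¹ - A) / ((s ^ 2)⁻¹ - s ^ 2)) ^ 2) := by
  have hd : (0:ℝ) < (s^2)⁻¹ - s^2 := by
    have h : s^2 < 1 := by nlinarith
    have h' : 1 < (s^2)⁻¹ := (one_lt_inv₀ (by positivity)).2 h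
    linarith
  rw [← sub_nonneg]
  have hsne : s ≠ 0 := ne_of_gt hs0
  have hAne : A ≠ 0 := ne_of_gt hA0
  have hTne : T ≠ 0 := ne_of_gt hT0
  have hs4 : s^4 ≤ 1 := pow_le_one₀ hs0.le hs1.le
  have hs4' : s^4 < 1 := pow_lt_one₀ hs0.le hs1 (by norm_num)
  have h14 : 1 - s^4 ≠ 0 := by nlinarith
  have h14' : 1 - (s^2)^2 ≠ 0 := by
    have : (s^2)^2 = s^4 := by ring
    rw [this]; exact h14
  have r : ∀ x : ℝ, x ≠ 0 → x⁻¹ - x = (1 - x^2)/x := by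
    intro x hx; field_simp
  rw [r (A*T*s^2) (by positivity), r A hAne, r (s^2) (by positivity)]
  have expand : A ^ 2 *
      (((1 - (A*T*s^2)^2)/(A*T*s^2) / ((1 - (s^2)^2)/(s^2))) ^ 2 -
        ((1 - A^2)/A / ((1 - (s^2)^2)/(s^2))) ^ 2) - (T^2)⁻¹ =
      s^4 * ((1 - T^2)*(2 - s^4*(1+T^2)) + (1 - A^4)*(T^2*(1 - T^2*s^4))) /
        (T^2 * (1 - s^4)^2) := by
    field_simp
    ring
  rw [expand]
  have hT2' : T^2 ≤ 1 := by nlinarith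
  have num : (0:ℝ) ≤ (1 - T^2)*(2 - s^4*(1+T^2)) + (1 - A^4)*(T^2*(1 - T^2*s^4)) := by
    have k1 : (0:ℝ) ≤ (1 - T^2) := by nlinarith
    have k2 : (0:ℝ) ≤ 2 - s^4*(1+T^2) := by nlinarith
    have k3 : (0:ℝ) ≤ 1 - A^4 := by nlinarith [pow_le_one₀ hA0.le hA1 (n := 4)]
    have hT2 : T^2 ≤ 1 := by nlinarith
    have hTs : T^2*s^4 ≤ 1 := mul_le_one₀ hT2 (by positivity) hs4
    have k4 : (0:ℝ) ≤ T^2*(1 - T^2*s^4) := mul_nonneg (sq_nonneg T) (by linarith)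
    nlinarith [mul_nonneg k1 k2, mul_nonneg k3 k4]
  positivity

theorem stmt1 (q : ℝ) (hq0 : 0 < q) (hq1 : q < 1) (L : ℕ) (hL : 1 ≤ L)
    (n : ℕ) (hn : n ≤ L - 1) :
    1 + lamSq q ((L : ℝ) / 2) (n : ℝ) ≥
      1 + ((n : ℝ) / 2) ^ 2 + q ^ ((n : ℝ) - (L : ℝ) + 1) := by
  obtain ⟨m, hm⟩ : ∃ m, L = n + m + 1 := ⟨L - 1 - n, by omega⟩
  subst hm
  set s := q ^ ((1:ℝ)/2) with hsdef
  have hs0 : 0 < s := Real.rpow_pos_of_pos hq0 _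
  have hs1 : s < 1 := Real.rpow_lt_one hq0.le hq1 (by norm_num)
  have key : ∀ k : ℕ, q ^ ((k:ℝ)/2) = s ^ k := by
    intro k
    rw [hsdef, ← Real.rpow_natCast (q ^ ((1:ℝ)/2)) k, ← Real.rpow_mul hq0.le]
    congr 1; ring
  have hq2 : q = s ^ 2 := by
    have := key 2
    norm_num at this
    exact this
  simp only [lamSq, qnum]
  have e1 : ((n+m+1 : ℕ):ℝ)/2 + 1/2 = ((n+m+2 : ℕ):ℝ)/2 := by push_cast; ring
  have e3 : (n:ℝ) - ((n+m+1:ℕ):ℝ) + 1 = -(((2*m:ℕ):ℝ)/2) := by push_cast; ring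
  rw [e1, e3, Real.rpow_neg hq0.le, Real.rpow_neg hq0.le, Real.rpow_neg hq0.le,
      key, key, key, Real.rpow_natCast q n, hq2]
  have h1 : s ^ (n+m+2) = s^n * s^m * s^2 := by ring
  have h2 : (s^2)^n = (s^n)^2 := by ring
  have h3 : s ^ (2*m) = (s^m)^2 := by ring
  rw [h1, h2, h3]
  have hA0 : 0 < s^n := pow_pos hs0 n
  have hT0 : 0 < s^m := pow_pos hs0 m
  have hA1 : s^n ≤ 1 := pow_le_one₀ hs0.le hs1.le
  have hT1 : s^m ≤ 1 := pow_le_one₀ hs0.le hs1.le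
  have := core_ineq s (s^n) (s^m) hs0 hs1 hA0 hA1 hT0 hT1
  linarith
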